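/- arXiv:0812.2553 — 2 statements merged into one kernel-verified Lean document; each statement's English description precedes it below -/
import Mathlib

section
/- (Multiplication theorem) For every integer p ≥ 0, every odd positive integer m, and every real number x, one has E_p(mx) = m^p · Σ_{s=0}^{m−1} (−1)^س E_p(x + s/m); that is, E_p(mx) = m^p Σ_{s=0}^{m−1} (−1)^s E_p(x + s/m). -/
open Finset

/-- The Euler numbers `E_n`, defined by `E_0 = 1` and the recurrence
`∑_{l=0}^{n} C(n,l) E_l + E_n = 0` for `n ≥ 1`. -/
def eulerNumber : ℕ → ℚ
  | 0 => 1
  | n + 1 => -(∑ l : Fin (n + 1), ((n + 1).choose l : ℚ) * eulerNumber l) / 2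

/-- The Euler polynomials `E_n(x) = ∑_{l=0}^{n} C(n,l) E_l x^{n-l}`. -/
noncomputable def eulerPoly (n : ℕ) (x : ℝ) : ℝ :=
  ∑ l ∈ Finset.range (n + 1), (n.choose l : ℝ) * (eulerNumber l : ℝ) * x ^ (n - l)

/-- The Euler function `Ē_p(x) = (-1)^⌊x⌋ E_p(x - ⌊x⌋)`. -/
noncomputable def eulerFun (p : ℕ) (x : ℝ) : ℝ := (-1 : ℝ) ^ ⌊x⌋ * eulerPoly p (x - ⌊x⌋)

/-- The Dedekind-type DC sum `T_p(h,k) = 2 ∑_{u=1}^{k-1} (-1)^{u-1} (u/k) Ē_p(hu/k)`. -/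
noncomputable def dcSum (p h k : ℕ) : ℝ :=
  2 * ∑ u ∈ Finset.Ico 1 k, (-1 : ℝ) ^ (u - 1) * ((u : ℝ) / k) * eulerFun p (h * u / k)

open Polynomial

/-- Recurrence for Euler numbers over ℚ. -/
lemma euler_rec (n : ℕ) :
    (∑ l ∈ range (n + 2), ((n + 1).choose l : ℚ) * eulerNumber l) + eulerNumber (n + 1) = 0 := by
  have h : eulerNumber (n + 1)
      = -(∑ l ∈ range (n + 1), ((n + 1).choose l : ℚ) * eulerNumber l) / 2 := by
    rw [eulerNumber,
      show (∑ l : Fin (n+1), ((n + 1).choose l : ℚ) * eulerNumber l)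
        = ∑ l ∈ range (n+1), ((n + 1).choose l : ℚ) * eulerNumber l
      from Fin.sum_univ_eq_sum_range (fun l => ((n + 1).choose l : ℚ) * eulerNumber l) (n+1)]
  rw [Finset.sum_range_succ, Nat.choose_self]
  field_simp at h ⊢
  simp only [Nat.cast_one, mul_one]
  linarith [h]

/-- The Euler polynomial as a real polynomial. -/
noncomputable def EP (n : ℕ) : Polynomial ℝ :=
  ∑ l ∈ range (n + 1), Polynomial.C ((n.choose l : ℝ) * ((eulerNumber l : ℚ) : ℝ)) * Polynomial.X ^ (n - l)

lemma EP_eval (n : ℕ) (x : ℝ) : (EP n).eval x = eulerPoly n x := by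
  simp [EP, eulerPoly, eval_finset_sum]

lemma EP_deriv (n : ℕ) : derivative (EP (n + 1)) = Polynomial.C ((n : ℝ) + 1) * EP n := by
  rw [EP, EP, derivative_sum, Finset.sum_range_succ]
  simp only [derivative_C_mul, derivative_X_pow]
  rw [Nat.sub_self]
  simp only [Nat.cast_zero, map_zero, zero_mul, mul_zero, add_zero]
  rw [Finset.mul_sum]
  refine Finset.sum_congr rfl fun l hl => ?_
  have hl' : l ≤ n := Nat.lt_succ_iff.mp (Finset.mem_range.mp hl)
  have h1 : n + 1 - l - 1 = n - l := by omega
  have h2 : ((n + 1 - l : ℕ) : ℝ) * ((n + 1).choose l : ℝ) = ((n : ℝ) + 1) * (n.choose l : ℝ) := by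
    have := Nat.choose_mul_succ_eq n l
    have : ((n.choose l * (n + 1) : ℕ) : ℝ) = (((n + 1).choose l * (n + 1 - l) : ℕ) : ℝ) := by
      exact_mod_cast congrArg (Nat.cast : ℕ → ℝ) this
    push_cast at this
    linarith
  rw [h1]
  have h3 : (((n+1).choose l : ℝ) * ((eulerNumber l : ℚ) : ℝ)) * ((n + 1 - l : ℕ) : ℝ)
      = ((n:ℝ)+1) * ((n.choose l : ℝ) * ((eulerNumber l : ℚ) : ℝ)) := by
    linear_combination ((eulerNumber l : ℚ) : ℝ) * h2
  rw [← mul_assoc, ← mul_assoc, ← Polynomial.C_mul, ← Polynomial.C_mul, h3]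

/-- eval of EP at 0 is the Euler number. -/
lemma EP_eval_zero (n : ℕ) : (EP n).eval 0 = ((eulerNumber n : ℚ) : ℝ) := by
  rw [EP]
  rw [Finset.sum_range_succ]
  simp only [eval_add, eval_finset_sum, eval_mul, eval_C, eval_pow, eval_X]
  rw [Nat.sub_self, Nat.choose_self]
  simp only [pow_zero, Nat.cast_one, one_mul, mul_one]
  rw [Finset.sum_eq_zero, zero_add]
  intro l hl
  have : n - l ≠ 0 := Nat.sub_ne_zero_of_lt (Finset.mem_range.mp hl)
  simp [zero_pow this]

/-- Key: `E_n(X+1) + E_n(X) = 2 X^n` as polynomials. -/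
lemma EP_key (n : ℕ) :
    (EP n).comp (Polynomial.X + Polynomial.C 1) + EP n = Polynomial.C 2 * Polynomial.X ^ n := by
  induction n with
  | zero =>
      have : EP 0 = Polynomial.C 1 := by
        simp [EP, eulerNumber]
      rw [this]; simp only [C_comp]; rw [pow_zero, mul_one, ← Polynomial.C_add]; norm_num
  | succ n ih =>
      set F := (EP (n+1)).comp (Polynomial.X + Polynomial.C 1) + EP (n+1)
        - Polynomial.C 2 * Polynomial.X ^ (n+1) with hF
      have hderiv : derivative F = 0 := by
        rw [hF]
        rw [derivative_sub, derivative_add, derivative_comp, EP_deriv]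
        simp only [derivative_add, derivative_X, derivative_C, add_zero, one_mul, mul_one,
          derivative_C_mul, derivative_X_pow, mul_comp, C_comp, Nat.add_sub_cancel,
          Nat.cast_add, Nat.cast_one]
        linear_combination (Polynomial.C ((n:ℝ)+1)) * ih
      have hdeg : F.natDegree = 0 := natDegree_eq_zero_of_derivative_eq_zero hderiv
      have hC : F = Polynomial.C (F.coeff 0) := eq_C_of_natDegree_eq_zero hdeg
      have heval : F.eval 0 = 0 := by
        rw [hF]
        simp only [eval_sub, eval_add, eval_comp, eval_X, eval_C, eval_mul, eval_pow]
        rw [zero_add, EP_eval_zero]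
        have h1 : (EP (n+1)).eval 1 = ∑ l ∈ range (n + 2), ((n+1).choose l : ℝ) * ((eulerNumber l : ℚ) : ℝ) := by
          simp [EP, eval_finset_sum]
        rw [h1]
        have := euler_rec n
        have hc : ((∑ l ∈ range (n + 2), ((n + 1).choose l : ℚ) * eulerNumber l : ℚ) : ℝ)
            + ((eulerNumber (n+1) : ℚ) : ℝ) = 0 := by exact_mod_cast congrArg (Rat.cast : ℚ → ℝ) this
        push_cast at hc
        rw [zero_pow (Nat.succ_ne_zero n)]
        linarith [hc]
      have : F = 0 := by
        rw [hC] at heval ⊢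
        simp only [eval_C] at heval
        rw [heval, map_zero]
      have h2 := this
      rw [hF] at h2
      linear_combination h2

lemma eulerPoly_key (n : ℕ) (x : ℝ) :
    eulerPoly n (x + 1) + eulerPoly n x = 2 * x ^ n := by
  have := congrArg (Polynomial.eval x) (EP_key n)
  simpa [EP_eval, eval_comp] using this

lemma telescope (m : ℕ) (hmodd : Odd m) (f : ℕ → ℝ) :
    (∑ s ∈ range m, (-1:ℝ)^s * f (s+1)) + ∑ s ∈ range m, (-1:ℝ)^s * f s
      = f 0 + f m := by
  have h1 : ∑ s ∈ range m, (-1:ℝ)^s * f (s+1)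
      = -∑ s ∈ range m, (-1:ℝ)^(s+1) * f (s+1) := by
    rw [← Finset.sum_neg_distrib]
    refine Finset.sum_congr rfl fun s _ => ?_
    rw [pow_succ]; ring
  have h2 : ∑ s ∈ range (m+1), (-1:ℝ)^s * f s
      = (∑ s ∈ range m, (-1:ℝ)^(s+1) * f (s+1)) + (-1:ℝ)^0 * f 0 :=
    Finset.sum_range_succ' _ m
  have h3 : ∑ s ∈ range (m+1), (-1:ℝ)^s * f s
      = (∑ s ∈ range m, (-1:ℝ)^s * f s) + (-1:ℝ)^m * f m :=
    Finset.sum_range_succ _ m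
  have hm1 : (-1:ℝ)^m = -1 := hmodd.neg_one_pow
  rw [hm1] at h3
  rw [h1]
  simp only [pow_zero, one_mul] at h2
  linarith [h2, h3]

/-- Multiplication theorem: for odd positive `m`,
`E_p(mx) = m^p ∑_{s=0}^{m−1} (−1)^s E_p(x + s/m)`. -/
theorem eulerPoly_mul (p m : ℕ) (hm : 0 < m) (hmodd : Odd m) (x : ℝ) :
    eulerPoly p ((m : ℝ) * x) =
      (m : ℝ) ^ p * ∑ s ∈ Finset.range m, (-1 : ℝ) ^ s * eulerPoly p (x + (s : ℝ) / m) := by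
  have hm0 : (m : ℝ) ≠ 0 := Nat.cast_ne_zero.mpr hm.ne'
  set Q : ℝ[X] := Polynomial.C ((m:ℝ)^p) * ∑ s ∈ range m,
      Polynomial.C ((-1:ℝ)^s) * (EP p).comp
        (Polynomial.C ((m:ℝ)⁻¹) * Polynomial.X + Polynomial.C ((s:ℝ)/(m:ℝ))) with hQ
  have hQeval : ∀ y : ℝ, Q.eval y
      = (m:ℝ)^p * ∑ s ∈ range m, (-1:ℝ)^s * eulerPoly p ((m:ℝ)⁻¹ * y + (s:ℝ)/m) := by
    intro y
    rw [hQ]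
    simp [eval_finset_sum, eval_comp, EP_eval]
  have hfun : ∀ y : ℝ, (EP p).eval (y+1) - Q.eval (y+1) = -((EP p).eval y - Q.eval y) := by
    intro y
    rw [hQeval, hQeval, EP_eval, EP_eval]
    have hshift : ∑ s ∈ range m, (-1:ℝ)^s * eulerPoly p ((m:ℝ)⁻¹ * (y+1) + (s:ℝ)/m)
        = ∑ s ∈ range m, (-1:ℝ)^s * eulerPoly p ((m:ℝ)⁻¹ * y + ((s+1 : ℕ):ℝ)/m) := by
      refine Finset.sum_congr rfl fun s _ => ?_
      congr 1
      push_cast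
      field_simp
      ring
    rw [hshift]
    have htel := telescope m hmodd (fun t => eulerPoly p ((m:ℝ)⁻¹*y + (t:ℝ)/m))
    simp only [Nat.cast_zero, zero_div, add_zero] at htel
    have hmm : (m:ℝ)/(m:ℝ) = 1 := div_self hm0
    rw [hmm] at htel
    have hk1 := eulerPoly_key p y
    have hk2 := eulerPoly_key p ((m:ℝ)⁻¹ * y)
    have hpow : (m:ℝ)^p * ((m:ℝ)⁻¹ * y)^p = y^p := by
      rw [mul_pow, ← mul_assoc, ← mul_pow, mul_inv_cancel₀ hm0, one_pow, one_mul]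
    linear_combination hk1 - (m:ℝ)^p * htel - (m:ℝ)^p * hk2 - 2 * hpow
  set D : ℝ[X] := EP p - Q with hD
  have hcomp : D.comp (Polynomial.X + Polynomial.C 1) = -D := by
    apply Polynomial.funext
    intro y
    rw [eval_comp]
    simp only [eval_add, eval_X, eval_C, eval_neg, eval_sub, hD]
    have := hfun y
    linarith [this]
  have hlc := Polynomial.leadingCoeff_comp (p := D) (q := Polynomial.X + Polynomial.C (1:ℝ))
    (by rw [Polynomial.natDegree_X_add_C]; norm_num)
  rw [hcomp, Polynomial.leadingCoeff_neg, (Polynomial.monic_X_add_C (1:ℝ)).leadingCoeff,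
    one_pow, mul_one] at hlc
  have hlc0 : D.leadingCoeff = 0 := by linarith [hlc]
  have hD0 : D = 0 := Polynomial.leadingCoeff_eq_zero.mp hlc0
  have hEQ : (EP p).eval ((m:ℝ)*x) = Q.eval ((m:ℝ)*x) := by
    have : (EP p - Q).eval ((m:ℝ)*x) = 0 := by rw [← hD, hD0, Polynomial.eval_zero]
    simp only [eval_sub] at this
    linarith [this]
  rw [EP_eval, hQeval] at hEQ
  rw [hEQ]
  congr 1
  refine Finset.sum_congr rfl fun s _ => ?_
  congr 2
  field_simp
end

section
/- For every odd integer p ≥ 1, the integral of x·E_p(x) over the unit interval equals ∫_0^1 x E_p(x) dx = 2 E_{p+2} / ((p+1)(p+2)), where E_p(x) is the p-th Euler polynomial and E_{p+2} the (p+2)-th Euler number. -/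
open Finset

section Aux

open Nat PowerSeries

lemma eulerNumber_succ (n : ℕ) :
    eulerNumber (n + 1) =
      -(∑ l ∈ range (n + 1), ((n + 1).choose l : ℚ) * eulerNumber l) / 2 := by
  rw [eulerNumber]
  congr 1
  rw [neg_inj]
  exact Fin.sum_univ_eq_sum_range (fun l => ((n + 1).choose l : ℚ) * eulerNumber l) (n + 1)

/-- `∑_{l=0}^{n} C(n,l) E_l = -E_n` for `n ≥ 1`. -/
lemma sum_choose_eulerNumber (n : ℕ) (hn : 1 ≤ n) :
    ∑ l ∈ range (n + 1), ((n).choose l : ℚ) * eulerNumber l = -eulerNumber n := by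
  obtain ⟨m, rfl⟩ := Nat.exists_eq_add_of_le hn
  rw [sum_range_succ, Nat.choose_self, Nat.cast_one, one_mul, add_comm 1 m,
    eulerNumber_succ]
  ring

lemma choose_factorial_q {n k : ℕ} (h : k ≤ n) :
    ((n).choose k : ℚ) * (k ! * ((n - k)!)) = (n)! := by
  have := Nat.choose_mul_factorial_mul_factorial h
  push_cast [← this]
  ring

lemma eulerPowerSeries_mul_exp_add_one :
    (mk fun n => eulerNumber n / n !) * (exp ℚ + 1) = 2 := by
  ext n
  cases n with
  | zero =>
    simp [coeff_mul, eulerNumber, coeff_zero_eq_constantCoeff, map_ofNat]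
    norm_num
  | succ n =>
    rw [coeff_mul, Finset.Nat.sum_antidiagonal_eq_sum_range_succ_mk]
    have h2 : ((coeff (R := ℚ) (n + 1)) 2) = 0 := by
      rw [show (2 : ℚ⟦X⟧) = C 2 from (map_ofNat (C) 2).symm, coeff_C, if_neg (by omega)]
    rw [h2]
    simp only [coeff_mk, Nat.succ_eq_add_one]
    have hterm : ∀ k ∈ range (n + 2),
        (eulerNumber k / k !) * (coeff (n + 1 - k)) (exp ℚ + 1) =
          ((n + 1).choose k : ℚ) * eulerNumber k / (n + 1)! +
            if k = n + 1 then eulerNumber (n + 1) / (n + 1)! else 0 := by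
      intro k hk
      rw [mem_range] at hk
      have hk' : k ≤ n + 1 := by omega
      have hcf := choose_factorial_q hk'
      have hfk : (k ! : ℚ) ≠ 0 := Nat.cast_ne_zero.mpr k.factorial_ne_zero
      have hfm : (((n + 1 - k)! : ℕ) : ℚ) ≠ 0 := Nat.cast_ne_zero.mpr (n + 1 - k).factorial_ne_zero
      have hfn : (((n + 1)! : ℕ) : ℚ) ≠ 0 := Nat.cast_ne_zero.mpr (n + 1).factorial_ne_zero
      rw [map_add, coeff_exp, coeff_one, Algebra.algebraMap_self_apply]
      by_cases hke : k = n + 1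
      · subst hke
        simp only [Nat.sub_self, if_pos rfl, Nat.choose_self, Nat.cast_one, one_mul,
          Nat.factorial_zero, Nat.cast_one]
        norm_num
        ring
      · rw [if_neg (by omega), if_neg hke, add_zero, add_zero]
        field_simp
        ring_nf
        ring_nf at hcf
        linear_combination (-1 : ℚ) * eulerNumber k * hcf
    rw [Finset.sum_congr rfl hterm, Finset.sum_add_distrib, Finset.sum_ite_eq' _ (n + 1)
      (fun _ => eulerNumber (n + 1) / (n + 1)!)]
    rw [if_pos (by simp), ← Finset.sum_div, sum_choose_eulerNumber (n + 1) (by omega)]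
    ring

theorem eulerNumber_even_eq_zero {n : ℕ} (he : Even n) (hn : 1 ≤ n) : eulerNumber n = 0 := by
  set F : ℚ⟦X⟧ := mk fun n => eulerNumber n / (n ! : ℚ) with hFdef
  have hF : F * (exp ℚ + 1) = 2 := eulerPowerSeries_mul_exp_add_one
  have hG : evalNegHom F * (evalNegHom (exp ℚ) + 1) = 2 := by
    have := congrArg (evalNegHom : ℚ⟦X⟧ →+* ℚ⟦X⟧) hF
    rwa [map_mul, map_add, map_one, map_ofNat] at this
  have hprod : (exp ℚ + 1) * (evalNegHom (exp ℚ) + 1) = exp ℚ + evalNegHom (exp ℚ) + 2 := by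
    linear_combination (exp_mul_exp_neg_eq_one (A := ℚ))
  have key : (F + evalNegHom F) * ((exp ℚ + 1) * (evalNegHom (exp ℚ) + 1)) =
      2 * ((exp ℚ + 1) * (evalNegHom (exp ℚ) + 1)) := by
    linear_combination (evalNegHom (exp ℚ) + 1) * hF + (exp ℚ + 1) * hG - 2 * hprod
  have hPne : (exp ℚ + 1) * (evalNegHom (exp ℚ) + 1) ≠ 0 := by
    intro h
    have h0 := congrArg (constantCoeff) h
    have h1 : constantCoeff (evalNegHom (exp ℚ)) = 1 := by
      have h2 := coeff_rescale (exp ℚ) (-1 : ℚ) 0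
      rw [← coeff_zero_eq_constantCoeff] at *
      simpa [evalNegHom] using h2
    simp only [map_mul, map_add, map_one, map_zero, constantCoeff_exp, h1] at h0
    norm_num at h0
  have hFG : F + evalNegHom F = 2 := mul_right_cancel₀ hPne key
  have hc := congrArg (coeff n) hFG
  rw [map_add, hFdef, coeff_mk] at hc
  have hcr : coeff n (evalNegHom (mk fun n => eulerNumber n / (n ! : ℚ))) =
      (-1 : ℚ) ^ n * (eulerNumber n / n !) := by
    rw [show (evalNegHom : ℚ⟦X⟧ →+* ℚ⟦X⟧) = rescale (-1 : ℚ) from rfl, coeff_rescale, coeff_mk]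
  rw [hcr, he.neg_one_pow, one_mul] at hc
  have h2 : coeff n (2 : ℚ⟦X⟧) = 0 := by
    rw [show (2 : ℚ⟦X⟧) = C 2 from (map_ofNat (C) 2).symm, coeff_C, if_neg (by omega)]
  rw [h2] at hc
  have hfn : ((n ! : ℕ) : ℚ) ≠ 0 := Nat.cast_ne_zero.mpr n.factorial_ne_zero
  field_simp at hc
  linarith [hc]

lemma term_identity (p l : ℕ) (hl : l ≤ p) :
    (p.choose l : ℚ) / (((p - l : ℕ) : ℚ) + 2) =
      ((p + 1).choose l : ℚ) / (p + 1) - ((p + 2).choose l : ℚ) / ((p + 1) * (p + 2)) := by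
  have A := Nat.choose_mul_succ_eq p l
  have B := Nat.choose_mul_succ_eq (p + 1) l
  rw [show p + 1 - l = (p - l) + 1 by omega] at A
  rw [show p + 1 + 1 - l = (p - l) + 2 by omega, show p + 1 + 1 = p + 2 by omega] at B
  set a : ℚ := ((p - l : ℕ) : ℚ) with ha
  have A' : (p.choose l : ℚ) * ((p : ℚ) + 1) = ((p + 1).choose l : ℚ) * (a + 1) := by
    rw [ha]; exact_mod_cast congrArg (Nat.cast : ℕ → ℚ) A
  have B' : ((p + 1).choose l : ℚ) * ((p : ℚ) + 2) = ((p + 2).choose l : ℚ) * (a + 2) := by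
    rw [ha]; exact_mod_cast congrArg (Nat.cast : ℕ → ℚ) B
  have h1 : a + 1 ≠ 0 := by positivity
  have h2 : a + 2 ≠ 0 := by positivity
  have h3 : ((p : ℚ) + 1) ≠ 0 := by positivity
  have h4 : ((p : ℚ) + 2) ≠ 0 := by positivity
  field_simp
  linear_combination (((p : ℚ) + 2) * A' - B')

lemma key_sum (p : ℕ) (hp : 1 ≤ p) (hpodd : Odd p) :
    ∑ l ∈ range (p + 1), (p.choose l : ℚ) * eulerNumber l / (((p - l : ℕ) : ℚ) + 2) =
      2 * eulerNumber (p + 2) / ((p + 1) * (p + 2)) := by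
  have hE1 : eulerNumber (p + 1) = 0 :=
    eulerNumber_even_eq_zero (by rcases hpodd with ⟨k, rfl⟩; exact ⟨k + 1, by ring⟩) (by omega)
  have hS1 : ∑ l ∈ range (p + 1), ((p + 1).choose l : ℚ) * eulerNumber l = 0 := by
    have h := sum_choose_eulerNumber (p + 1) (by omega)
    rw [sum_range_succ, Nat.choose_self, Nat.cast_one, one_mul, hE1] at h
    linarith [h]
  have hS2 : ∑ l ∈ range (p + 1), ((p + 2).choose l : ℚ) * eulerNumber l =
      -2 * eulerNumber (p + 2) := by
    have h := sum_choose_eulerNumber (p + 2) (by omega)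
    rw [show p + 2 + 1 = (p + 1) + 1 + 1 by ring] at h
    rw [sum_range_succ, sum_range_succ] at h
    rw [show (p + 1) + 1 = p + 2 by ring] at h
    rw [Nat.choose_self, Nat.cast_one, one_mul, hE1, mul_zero, add_zero] at h
    linarith [h]
  have hterm : ∀ l ∈ range (p + 1),
      (p.choose l : ℚ) * eulerNumber l / (((p - l : ℕ) : ℚ) + 2) =
        ((p + 1).choose l : ℚ) * eulerNumber l / (p + 1) -
          ((p + 2).choose l : ℚ) * eulerNumber l / ((p + 1) * (p + 2)) := by
    intro l hl
    rw [mem_range] at hl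
    have h := term_identity p l (by omega)
    calc (p.choose l : ℚ) * eulerNumber l / (((p - l : ℕ) : ℚ) + 2)
        = ((p.choose l : ℚ) / (((p - l : ℕ) : ℚ) + 2)) * eulerNumber l := by ring
      _ = (((p + 1).choose l : ℚ) / (p + 1) -
            ((p + 2).choose l : ℚ) / ((p + 1) * (p + 2))) * eulerNumber l := by rw [h]
      _ = _ := by ring
  rw [Finset.sum_congr rfl hterm, Finset.sum_sub_distrib, ← Finset.sum_div, ← Finset.sum_div,
    hS1, hS2]
  ring

end Aux

/-- For odd `p ≥ 1`, `∫_0^1 x E_p(x) dx = 2 E_{p+2} / ((p+1)(p+2))`. -/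
theorem integral_mul_eulerPoly (p : ℕ) (hp : 1 ≤ p) (hpodd : Odd p) :
    ∫ x in (0 : ℝ)..1, x * eulerPoly p x =
      2 * (eulerNumber (p + 2) : ℝ) / ((p + 1) * (p + 2)) := by
  have hfun : (fun x : ℝ => x * eulerPoly p x) =
      fun x : ℝ => ∑ l ∈ range (p + 1),
        (p.choose l : ℝ) * (eulerNumber l : ℝ) * x ^ (p - l + 1) := by
    funext x
    rw [eulerPoly, Finset.mul_sum]
    exact Finset.sum_congr rfl fun l _ => by ring
  rw [hfun, intervalIntegral.integral_finset_sum
    (f := fun l x => (p.choose l : ℝ) * (eulerNumber l : ℝ) * x ^ (p - l + 1)) (fun l _ =>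
    ((continuous_const.mul (continuous_pow _)).intervalIntegrable 0 1))]
  have hval : ∀ l ∈ range (p + 1),
      (∫ x in (0 : ℝ)..1, (p.choose l : ℝ) * (eulerNumber l : ℝ) * x ^ (p - l + 1)) =
        (p.choose l : ℝ) * (eulerNumber l : ℝ) / (((p - l : ℕ) : ℝ) + 2) := by
    intro l _
    rw [intervalIntegral.integral_const_mul, integral_pow]
    push_cast
    norm_num
    ring
  rw [Finset.sum_congr rfl hval]
  have hcast : ∑ l ∈ range (p + 1),
      (p.choose l : ℝ) * (eulerNumber l : ℝ) / (((p - l : ℕ) : ℝ) + 2) =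
        ((∑ l ∈ range (p + 1),
          (p.choose l : ℚ) * eulerNumber l / (((p - l : ℕ) : ℚ) + 2) : ℚ) : ℝ) := by
    push_cast
    rfl
  rw [hcast, key_sum p hp hpodd]
  push_cast
  ring
end
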